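/- Let f : A → B be a ring epimorphism between finite dimensional K-algebras and let C denote the class of finitely generated A-modules X whose minimal projective presentation becomes an isomorphism after applying B ⊗_A −. Then C is closed under finite direct sums, direct summands, and extensions. -/

import Mathlib

noncomputable section
open Function

/-- Ring epimorphism: epimorphism in the category of unital rings. -/
def IsRingEpi {A B : Type} [Ring A] [Ring B] (f : A →+* B) : Prop :=
  ∀ (C : Type) [Ring C], ∀ g h : B →+* C, g.comp f = h.comp f → g = h

/-- Relations defining the tensor product of a right `A`-module and a left `A`-module
over the (possibly noncommutative) ring `A`. -/
def ncRel (A : Type) [Ring A] (M : Type) [AddCommGroup M] [Module Aᵐᵒᵖ M]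
    (N : Type) [AddCommGroup N] [Module A N] : Submodule ℤ (TensorProduct ℤ M N) :=
  Submodule.span ℤ {x | ∃ (a : A) (m : M) (n : N),
    x = (MulOpposite.op a • m) ⊗ₜ[ℤ] n - m ⊗ₜ[ℤ] (a • n)}

/-- The tensor product `M ⊗_A N` of a right `A`-module `M` and a left `A`-module `N`. -/
abbrev NCTensor (A : Type) [Ring A] (M : Type) [AddCommGroup M] [Module Aᵐᵒᵖ M]
    (N : Type) [AddCommGroup N] [Module A N] : Type :=
  TensorProduct ℤ M N ⧸ ncRel A M N

/-- Functoriality of `⊗_A N` in the right-module variable. -/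
def ncMapM {A : Type} [Ring A] {M M' : Type} [AddCommGroup M] [Module Aᵐᵒᵖ M]
    [AddCommGroup M'] [Module Aᵐᵒᵖ M'] (N : Type) [AddCommGroup N] [Module A N]
    (g : M →ₗ[Aᵐᵒᵖ] M') : NCTensor A M N →ₗ[ℤ] NCTensor A M' N :=
  Submodule.mapQ _ _ (TensorProduct.map g.toAddMonoidHom.toIntLinearMap LinearMap.id)
    (by
      rw [ncRel, Submodule.span_le]
      rintro x ⟨a, m, n, rfl⟩
      refine Submodule.mem_comap.2 ?_
      have h1 : (TensorProduct.map g.toAddMonoidHom.toIntLinearMap LinearMap.id)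
          ((MulOpposite.op a • m) ⊗ₜ[ℤ] n - m ⊗ₜ[ℤ] (a • n))
          = (MulOpposite.op a • g m) ⊗ₜ[ℤ] n - (g m) ⊗ₜ[ℤ] (a • n) := by
        simp [map_sub, TensorProduct.map_tmul, map_smul]
      erw [h1]
      exact Submodule.subset_span ⟨a, g m, n, rfl⟩)

/-- Functoriality of `M ⊗_A -` in the left-module variable. -/
def ncMapN {A : Type} [Ring A] (M : Type) [AddCommGroup M] [Module Aᵐᵒᵖ M]
    {N N' : Type} [AddCommGroup N] [Module A N] [AddCommGroup N'] [Module A N']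
    (g : N →ₗ[A] N') : NCTensor A M N →ₗ[ℤ] NCTensor A M N' :=
  Submodule.mapQ _ _ (TensorProduct.map LinearMap.id g.toAddMonoidHom.toIntLinearMap)
    (by
      rw [ncRel, Submodule.span_le]
      rintro x ⟨a, m, n, rfl⟩
      refine Submodule.mem_comap.2 ?_
      have h1 : (TensorProduct.map LinearMap.id g.toAddMonoidHom.toIntLinearMap)
          ((MulOpposite.op a • m) ⊗ₜ[ℤ] n - m ⊗ₜ[ℤ] (a • n))
          = (MulOpposite.op a • m) ⊗ₜ[ℤ] (g n) - m ⊗ₜ[ℤ] (g (a • n)) := by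
        simp [map_sub, TensorProduct.map_tmul]
      erw [h1]
      rw [map_smul]
      exact Submodule.subset_span ⟨a, m, g n, rfl⟩)

/-- The left `A`-module structure on `B` induced by a ring homomorphism `A → B`. -/
def leftMod {A B : Type} [Ring A] [Ring B] (f : A →+* B) : Module A B :=
  Module.compHom B f

/-- The right `A`-module structure on `B` induced by a ring homomorphism `A → B`. -/
def rightMod {A B : Type} [Ring A] [Ring B] (f : A →+* B) : Module Aᵐᵒᵖ B :=
  Module.compHom B (RingHom.op f)

/-- `B ⊗_A N` for a ring homomorphism `f : A → B` and a left `A`-module `N`. -/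
abbrev TensorWithHom {A B : Type} [Ring A] [Ring B] (f : A →+* B)
    (N : Type) [AddCommGroup N] [Module A N] : Type :=
  @NCTensor A _ B _ (rightMod f) N _ _

/-- The map `B ⊗_A σ` for a ring homomorphism `f : A → B` and an `A`-linear map `σ`. -/
def tensorMapOfHom {A B : Type} [Ring A] [Ring B] (f : A →+* B)
    {P Q : Type} [AddCommGroup P] [Module A P] [AddCommGroup Q] [Module A Q]
    (σ : P →ₗ[A] Q) : TensorWithHom f P →ₗ[ℤ] TensorWithHom f Q :=
  @ncMapN A _ B _ (rightMod f) P Q _ _ _ _ σ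

/-- A projective cover: a surjection from a projective module whose kernel is
superfluous. -/
def IsProjCover (A : Type) [Ring A] {P X : Type} [AddCommGroup P] [Module A P]
    [AddCommGroup X] [Module A X] (p : P →ₗ[A] X) : Prop :=
  Module.Projective A P ∧ Surjective p ∧
    ∀ L : Submodule A P, L ⊔ LinearMap.ker p = ⊤ → L = ⊤

/-- The minimal projective presentation of `X` becomes an isomorphism after applying
`B ⊗_A -` (quantified over all minimal projective presentations of `X`). -/
def MinPresInverted {A B : Type} [Ring A] [Ring B] (f : A →+* B)
    (X : ModuleCat.{0} A) : Prop :=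
  ∀ (P₀ P₁ : ModuleCat.{0} A) (σ : ↑P₁ →ₗ[A] ↑P₀) (π : ↑P₀ →ₗ[A] ↑X)
    (hexact : LinearMap.range σ = LinearMap.ker π),
    IsProjCover A π →
    IsProjCover A (σ.codRestrict (LinearMap.ker π)
      (fun x => hexact ▸ LinearMap.mem_range_self σ x)) →
    Function.Bijective (tensorMapOfHom f σ)

section TensorLemmas

variable {A B : Type} [Ring A] [Ring B] (f : A →+* B)

theorem tw_mk {P Q : Type} [AddCommGroup P] [Module A P] [AddCommGroup Q] [Module A Q]
    (σ : P →ₗ[A] Q) (x : TensorProduct ℤ B P) :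
    tensorMapOfHom f σ (Submodule.Quotient.mk x) =
      Submodule.Quotient.mk
        (TensorProduct.map LinearMap.id σ.toAddMonoidHom.toIntLinearMap x) := rfl

theorem tw_comp {P Q R : Type} [AddCommGroup P] [Module A P] [AddCommGroup Q] [Module A Q]
    [AddCommGroup R] [Module A R] (σ : P →ₗ[A] Q) (τ : Q →ₗ[A] R) :
    tensorMapOfHom f (τ.comp σ) =
      (tensorMapOfHom f τ).comp (tensorMapOfHom f σ) := by
  apply LinearMap.ext
  intro x
  obtain ⟨y, rfl⟩ := Submodule.Quotient.mk_surjective _ x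
  induction y using TensorProduct.induction_on with
  | zero => simp
  | tmul b p => simp [tw_mk]
  | add y z hy hz =>
      rw [Submodule.Quotient.mk_add, map_add, map_add, hy, hz]

theorem tw_id {P : Type} [AddCommGroup P] [Module A P] :
    tensorMapOfHom f (LinearMap.id (M := P) (R := A)) = LinearMap.id := by
  apply LinearMap.ext
  intro x
  obtain ⟨y, rfl⟩ := Submodule.Quotient.mk_surjective _ x
  induction y using TensorProduct.induction_on with
  | zero => simp
  | tmul b p => simp [tw_mk]
  | add y z hy hz =>
      rw [Submodule.Quotient.mk_add, map_add, hy, hz, map_add]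

theorem tw_add {P Q : Type} [AddCommGroup P] [Module A P] [AddCommGroup Q] [Module A Q]
    (σ τ : P →ₗ[A] Q) :
    tensorMapOfHom f (σ + τ) = tensorMapOfHom f σ + tensorMapOfHom f τ := by
  apply LinearMap.ext
  intro x
  obtain ⟨y, rfl⟩ := Submodule.Quotient.mk_surjective _ x
  induction y using TensorProduct.induction_on with
  | zero => simp
  | tmul b p =>
      simp only [LinearMap.add_apply, tw_mk, TensorProduct.map_tmul]
      rw [← Submodule.Quotient.mk_add, ← TensorProduct.tmul_add]
      rfl
  | add y z hy hz =>
      rw [Submodule.Quotient.mk_add]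
      simp only [map_add, hy, hz]

theorem tw_zero {P Q : Type} [AddCommGroup P] [Module A P] [AddCommGroup Q] [Module A Q] :
    tensorMapOfHom f (0 : P →ₗ[A] Q) = 0 := by
  apply LinearMap.ext
  intro x
  obtain ⟨y, rfl⟩ := Submodule.Quotient.mk_surjective _ x
  induction y using TensorProduct.induction_on with
  | zero => simp
  | tmul b p =>
      simp only [tw_mk, TensorProduct.map_tmul, LinearMap.zero_apply]
      rw [show (0 : P →ₗ[A] Q).toAddMonoidHom.toIntLinearMap p = 0 from rfl,
        TensorProduct.tmul_zero]
      simp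
  | add y z hy hz =>
      rw [Submodule.Quotient.mk_add, map_add, hy, hz]
      simp

end TensorLemmas

section ProdLemmas

variable {A B : Type} [Ring A] [Ring B] (f : A →+* B)

theorem tw_comp_apply {P Q R : Type} [AddCommGroup P] [Module A P] [AddCommGroup Q]
    [Module A Q] [AddCommGroup R] [Module A R] (σ : P →ₗ[A] Q) (τ : Q →ₗ[A] R)
    (x : TensorWithHom f P) :
    tensorMapOfHom f τ (tensorMapOfHom f σ x) = tensorMapOfHom f (τ.comp σ) x :=
  (LinearMap.congr_fun (tw_comp f σ τ) x).symm

variable (P Q : Type) [AddCommGroup P] [Module A P] [AddCommGroup Q] [Module A Q]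

def twalpha : TensorWithHom f P × TensorWithHom f Q →ₗ[ℤ] TensorWithHom f (P × Q) :=
  (tensorMapOfHom f (LinearMap.inl A P Q)).comp
      (LinearMap.fst ℤ (TensorWithHom f P) (TensorWithHom f Q)) +
    (tensorMapOfHom f (LinearMap.inr A P Q)).comp
      (LinearMap.snd ℤ (TensorWithHom f P) (TensorWithHom f Q))

def twbeta : TensorWithHom f (P × Q) →ₗ[ℤ] TensorWithHom f P × TensorWithHom f Q :=
  (tensorMapOfHom f (LinearMap.fst A P Q)).prod (tensorMapOfHom f (LinearMap.snd A P Q))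

theorem tfst_alpha (z : TensorWithHom f P × TensorWithHom f Q) :
    tensorMapOfHom f (LinearMap.fst A P Q) (twalpha f P Q z) = z.1 := by
  simp only [twalpha, LinearMap.add_apply, LinearMap.comp_apply, LinearMap.fst_apply,
    LinearMap.snd_apply, map_add, tw_comp_apply]
  rw [show (LinearMap.fst A P Q).comp (LinearMap.inl A P Q) = LinearMap.id from rfl,
    show (LinearMap.fst A P Q).comp (LinearMap.inr A P Q) = 0 from rfl, tw_id, tw_zero]
  simp

theorem tsnd_alpha (z : TensorWithHom f P × TensorWithHom f Q) :
    tensorMapOfHom f (LinearMap.snd A P Q) (twalpha f P Q z) = z.2 := by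
  simp only [twalpha, LinearMap.add_apply, LinearMap.comp_apply, LinearMap.fst_apply,
    LinearMap.snd_apply, map_add, tw_comp_apply]
  rw [show (LinearMap.snd A P Q).comp (LinearMap.inl A P Q) = 0 from rfl,
    show (LinearMap.snd A P Q).comp (LinearMap.inr A P Q) = LinearMap.id from rfl,
    tw_id, tw_zero]
  simp

theorem twbeta_alpha (z : TensorWithHom f P × TensorWithHom f Q) :
    twbeta f P Q (twalpha f P Q z) = z := by
  simp only [twbeta, LinearMap.prod_apply, Function.prod]
  rw [tfst_alpha, tsnd_alpha]

theorem inl_fst_add_inr_snd :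
    (LinearMap.inl A P Q).comp (LinearMap.fst A P Q) +
      (LinearMap.inr A P Q).comp (LinearMap.snd A P Q) = LinearMap.id := by
  apply LinearMap.ext
  intro x
  simp

theorem twalpha_beta (z : TensorWithHom f (P × Q)) :
    twalpha f P Q (twbeta f P Q z) = z := by
  simp only [twalpha, twbeta, LinearMap.add_apply, LinearMap.comp_apply,
    LinearMap.fst_apply, LinearMap.snd_apply, LinearMap.prod_apply, Function.prod,
    tw_comp_apply]
  rw [← LinearMap.add_apply, ← tw_add, inl_fst_add_inr_snd, tw_id]
  rfl

theorem twalpha_bij : Function.Bijective (twalpha f P Q) :=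
  ⟨Function.LeftInverse.injective (twbeta_alpha f P Q),
    Function.RightInverse.surjective (twalpha_beta f P Q)⟩

theorem twbeta_bij : Function.Bijective (twbeta f P Q) :=
  ⟨Function.LeftInverse.injective (twalpha_beta f P Q),
    Function.RightInverse.surjective (twbeta_alpha f P Q)⟩

end ProdLemmas

section Triangular

variable {A B : Type} [Ring A] [Ring B] (f : A →+* B)
variable {P₁ P₂ Q₁ Q₂ : Type} [AddCommGroup P₁] [Module A P₁] [AddCommGroup P₂] [Module A P₂]
  [AddCommGroup Q₁] [Module A Q₁] [AddCommGroup Q₂] [Module A Q₂]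

/-- The components of the conjugated map `β ∘ T ρ ∘ α`. -/
theorem tw_conj_component (ρ : P₁ × P₂ →ₗ[A] Q₁ × Q₂)
    (σ : P₁ →ₗ[A] Q₁) (δ : P₂ →ₗ[A] Q₁) (τ : P₂ →ₗ[A] Q₂)
    (hfst : (LinearMap.fst A Q₁ Q₂).comp ρ =
      σ.comp (LinearMap.fst A P₁ P₂) + δ.comp (LinearMap.snd A P₁ P₂))
    (hsnd : (LinearMap.snd A Q₁ Q₂).comp ρ = τ.comp (LinearMap.snd A P₁ P₂))
    (z : TensorWithHom f P₁ × TensorWithHom f P₂) :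
    twbeta f Q₁ Q₂ (tensorMapOfHom f ρ (twalpha f P₁ P₂ z)) =
      (tensorMapOfHom f σ z.1 + tensorMapOfHom f δ z.2, tensorMapOfHom f τ z.2) := by
  simp only [twbeta, LinearMap.prod_apply, Function.prod, tw_comp_apply, hfst, hsnd]
  refine Prod.ext_iff.2 ⟨?_, ?_⟩
  · show tensorMapOfHom f (σ.comp (LinearMap.fst A P₁ P₂) + δ.comp (LinearMap.snd A P₁ P₂))
        (twalpha f P₁ P₂ z) = _
    rw [tw_add, LinearMap.add_apply, tw_comp f (LinearMap.fst A P₁ P₂) σ,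
      tw_comp f (LinearMap.snd A P₁ P₂) δ]
    simp only [LinearMap.comp_apply, tfst_alpha, tsnd_alpha]
  · show tensorMapOfHom f (τ.comp (LinearMap.snd A P₁ P₂)) (twalpha f P₁ P₂ z) = _
    rw [tw_comp f (LinearMap.snd A P₁ P₂) τ]
    simp only [LinearMap.comp_apply, tsnd_alpha]

theorem tw_bij_triangular (ρ : P₁ × P₂ →ₗ[A] Q₁ × Q₂)
    (σ : P₁ →ₗ[A] Q₁) (δ : P₂ →ₗ[A] Q₁) (τ : P₂ →ₗ[A] Q₂)
    (hfst : (LinearMap.fst A Q₁ Q₂).comp ρ =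
      σ.comp (LinearMap.fst A P₁ P₂) + δ.comp (LinearMap.snd A P₁ P₂))
    (hsnd : (LinearMap.snd A Q₁ Q₂).comp ρ = τ.comp (LinearMap.snd A P₁ P₂))
    (hσ : Function.Bijective (tensorMapOfHom f σ))
    (hτ : Function.Bijective (tensorMapOfHom f τ)) :
    Function.Bijective (tensorMapOfHom f ρ) := by
  set m : TensorWithHom f P₁ × TensorWithHom f P₂ → TensorWithHom f Q₁ × TensorWithHom f Q₂ :=
    fun z => twbeta f Q₁ Q₂ (tensorMapOfHom f ρ (twalpha f P₁ P₂ z)) with hm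
  have hmval : ∀ z, m z = (tensorMapOfHom f σ z.1 + tensorMapOfHom f δ z.2,
      tensorMapOfHom f τ z.2) := fun z => tw_conj_component f ρ σ δ τ hfst hsnd z
  have hmbij : Function.Bijective m := by
    constructor
    · intro z w hzw
      rw [hmval, hmval] at hzw
      have h2 : z.2 = w.2 := hτ.1 (congrArg Prod.snd hzw)
      have h1 : z.1 = w.1 := by
        have h := congrArg Prod.fst hzw
        simp only at h
        rw [h2] at h
        exact hσ.1 (add_right_cancel h)
      exact Prod.ext h1 h2
    · rintro ⟨a, b⟩
      obtain ⟨y, hy⟩ := hτ.2 b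
      obtain ⟨x, hx⟩ := hσ.2 (a - tensorMapOfHom f δ y)
      refine ⟨(x, y), ?_⟩
      rw [hmval]
      simp only [hx, hy, sub_add_cancel]
  have hcomp : ⇑(tensorMapOfHom f ρ) =
      (twalpha f Q₁ Q₂) ∘ m ∘ (twbeta f P₁ P₂) := by
    funext u
    simp only [hm, Function.comp_apply, twalpha_beta]
  rw [hcomp]
  exact ((twalpha_bij f Q₁ Q₂).comp hmbij).comp (twbeta_bij f P₁ P₂)

theorem tw_bij_prodMap (σ : P₁ →ₗ[A] Q₁) (τ : P₂ →ₗ[A] Q₂)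
    (hσ : Function.Bijective (tensorMapOfHom f σ))
    (hτ : Function.Bijective (tensorMapOfHom f τ)) :
    Function.Bijective (tensorMapOfHom f (σ.prodMap τ)) := by
  refine tw_bij_triangular f _ σ 0 τ ?_ ?_ hσ hτ
  · apply LinearMap.ext; intro x; simp
  · apply LinearMap.ext; intro x; simp

theorem tw_bij_of_prodMap (σ : P₁ →ₗ[A] Q₁) (τ : P₂ →ₗ[A] Q₂)
    (h : Function.Bijective (tensorMapOfHom f (σ.prodMap τ))) :
    Function.Bijective (tensorMapOfHom f σ) := by
  have hfst : (LinearMap.fst A Q₁ Q₂).comp (σ.prodMap τ) =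
      σ.comp (LinearMap.fst A P₁ P₂) + (0 : P₂ →ₗ[A] Q₁).comp (LinearMap.snd A P₁ P₂) := by
    apply LinearMap.ext; intro x; simp
  have hsnd : (LinearMap.snd A Q₁ Q₂).comp (σ.prodMap τ) =
      τ.comp (LinearMap.snd A P₁ P₂) := by
    apply LinearMap.ext; intro x; simp
  have hmval : ∀ z : TensorWithHom f P₁ × TensorWithHom f P₂,
      twbeta f Q₁ Q₂ (tensorMapOfHom f (σ.prodMap τ) (twalpha f P₁ P₂ z)) =
        (tensorMapOfHom f σ z.1, tensorMapOfHom f τ z.2) := by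
    intro z
    rw [tw_conj_component f _ σ 0 τ hfst hsnd z, tw_zero]
    simp
  have hmbij : Function.Bijective (fun z : TensorWithHom f P₁ × TensorWithHom f P₂ =>
      twbeta f Q₁ Q₂ (tensorMapOfHom f (σ.prodMap τ) (twalpha f P₁ P₂ z))) :=
    (twbeta_bij f Q₁ Q₂).comp (h.comp (twalpha_bij f P₁ P₂))
  constructor
  · intro x x' hx
    have heq : twbeta f Q₁ Q₂ (tensorMapOfHom f (σ.prodMap τ) (twalpha f P₁ P₂ (x, 0))) =
        twbeta f Q₁ Q₂ (tensorMapOfHom f (σ.prodMap τ) (twalpha f P₁ P₂ (x', 0))) := by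
      rw [hmval, hmval]
      simp only [hx]
    exact (Prod.ext_iff.1 (hmbij.1 heq)).1
  · intro a
    obtain ⟨z, hz⟩ := hmbij.2 (a, tensorMapOfHom f τ 0)
    simp only at hz
    rw [hmval] at hz
    exact ⟨z.1, (Prod.ext_iff.1 hz).1⟩

end Triangular

section Covers

variable {A : Type} [Ring A]

/-- A submodule is superfluous (small). -/
def IsSmallSub {M : Type} [AddCommGroup M] [Module A M] (N : Submodule A M) : Prop :=
  ∀ L : Submodule A M, L ⊔ N = ⊤ → L = ⊤

theorem IsSmallSub.map {M M' : Type} [AddCommGroup M] [Module A M] [AddCommGroup M']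
    [Module A M'] {N : Submodule A M} (hN : IsSmallSub N) (g : M →ₗ[A] M') :
    IsSmallSub (N.map g) := by
  intro L hL
  have hcomap : Submodule.comap g L ⊔ N = ⊤ := by
    rw [eq_top_iff]
    intro x _
    have hx : g x ∈ L ⊔ N.map g := hL ▸ Submodule.mem_top
    obtain ⟨l, hl, y, hy, hsum⟩ := Submodule.mem_sup.1 hx
    obtain ⟨n, hn, rfl⟩ := hy
    refine Submodule.mem_sup.2 ⟨x - n, ?_, n, hn, by abel⟩
    have : g (x - n) ∈ L := by
      rw [map_sub]
      have : g x - g n = l := by rw [← hsum]; abel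
      rw [this]; exact hl
    exact this
  have htop := hN _ hcomap
  have hle : N.map g ≤ L := by
    rintro y ⟨n, hn, rfl⟩
    have : n ∈ Submodule.comap g L := htop ▸ Submodule.mem_top
    exact this
  rw [← hL, sup_eq_left.2 hle]

theorem IsSmallSub.sup {M : Type} [AddCommGroup M] [Module A M] {N₁ N₂ : Submodule A M}
    (h₁ : IsSmallSub N₁) (h₂ : IsSmallSub N₂) : IsSmallSub (N₁ ⊔ N₂) := by
  intro L hL
  rw [sup_comm N₁ N₂, ← sup_assoc] at hL
  exact h₂ _ (h₁ _ hL)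

theorem IsProjCover.small {P X : Type} [AddCommGroup P] [Module A P] [AddCommGroup X]
    [Module A X] {p : P →ₗ[A] X} (hp : IsProjCover A p) : IsSmallSub (LinearMap.ker p) :=
  fun L hL => hp.2.2 L hL

/-- If `p` is a projective cover and `p ∘ u = p` then `u` is bijective. -/
theorem cover_endo_bij {P X : Type} [AddCommGroup P] [Module A P] [AddCommGroup X]
    [Module A X] {p : P →ₗ[A] X} (hp : IsProjCover A p) (u : P →ₗ[A] P)
    (h : p.comp u = p) : Function.Bijective u := by
  obtain ⟨hproj, hsurj, hsmall⟩ := hp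
  have hker : LinearMap.ker u ≤ LinearMap.ker p := by
    intro x hx
    have : p (u x) = p x := LinearMap.congr_fun h x
    rw [LinearMap.mem_ker.1 hx, map_zero] at this
    exact LinearMap.mem_ker.2 this.symm
  have hru : LinearMap.range u = ⊤ := by
    apply hsmall
    rw [eq_top_iff]
    intro x _
    refine Submodule.mem_sup.2 ⟨u x, LinearMap.mem_range_self u x, x - u x, ?_, by abel⟩
    have : p (u x) = p x := LinearMap.congr_fun h x
    simp [LinearMap.mem_ker, this]
  have husurj : Function.Surjective u := LinearMap.range_eq_top.1 hru
  haveI := hproj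
  obtain ⟨s, hs⟩ := Module.projective_lifting_property u (LinearMap.id (R := A) (M := P)) husurj
  have hsu : ∀ x, u (s x) = x := fun x => LinearMap.congr_fun hs x
  have hrs : LinearMap.range s = ⊤ := by
    apply hsmall
    rw [eq_top_iff]
    intro x _
    refine Submodule.mem_sup.2 ⟨s (u x), LinearMap.mem_range_self s _, x - s (u x), ?_, by abel⟩
    apply hker
    simp [LinearMap.mem_ker, hsu]
  have hssurj : Function.Surjective s := LinearMap.range_eq_top.1 hrs
  constructor
  · intro x y hxy
    obtain ⟨a, rfl⟩ := hssurj x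
    obtain ⟨b, rfl⟩ := hssurj y
    rw [hsu, hsu] at hxy
    rw [hxy]
  · intro y
    exact ⟨s y, hsu y⟩

/-- The product of two projective covers is a projective cover. -/
theorem IsProjCover.prodMap {P X Q Y : Type} [AddCommGroup P] [Module A P] [AddCommGroup X]
    [Module A X] [AddCommGroup Q] [Module A Q] [AddCommGroup Y] [Module A Y]
    {p : P →ₗ[A] X} {q : Q →ₗ[A] Y} (hp : IsProjCover A p) (hq : IsProjCover A q) :
    IsProjCover A (p.prodMap q) := by
  haveI := hp.1; haveI := hq.1
  refine ⟨inferInstance, ?_, ?_⟩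
  · intro ⟨x, y⟩
    obtain ⟨a, ha⟩ := hp.2.1 x
    obtain ⟨b, hb⟩ := hq.2.1 y
    exact ⟨(a, b), by simp [ha, hb]⟩
  · intro L hL
    rw [LinearMap.ker_prodMap, LinearMap.prod_eq_sup_map] at hL
    exact ((hp.small.map (LinearMap.inl A P Q)).sup (hq.small.map (LinearMap.inr A P Q))) L hL

end Covers

section Existence

variable (A : Type) [Ring A]

theorem aNoeth (K : Type) [Field K] [Algebra K A] [FiniteDimensional K A] :
    IsNoetherianRing A :=
  isNoetherian_of_tower K (inferInstance : IsNoetherian K A)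

theorem aArt (K : Type) [Field K] [Algebra K A] [FiniteDimensional K A] :
    IsArtinianRing A :=
  isArtinian_of_tower K (inferInstance : IsArtinian K A)

theorem p_comp_pow {P X : Type} [AddCommGroup P] [Module A P] [AddCommGroup X] [Module A X]
    (p : P →ₗ[A] X) (u : P →ₗ[A] P) (h : p.comp u = p) (m : ℕ) : p.comp (u ^ m) = p := by
  induction m with
  | zero => simp [LinearMap.comp_id, pow_zero]; rfl
  | succ m ih =>
      rw [pow_succ, Module.End.mul_eq_comp, ← LinearMap.comp_assoc, ih, h]

/-- Existence of projective covers of finitely generated modules over a finite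
dimensional algebra. -/
theorem exists_cover (K : Type) [Field K] [Algebra K A] [FiniteDimensional K A] (X : Type) [AddCommGroup X] [Module A X] [Module.Finite A X] :
    ∃ (P : Type) (_ : AddCommGroup P) (_ : Module A P) (p : P →ₗ[A] X),
      IsProjCover A p ∧ Module.Finite A P := by
  haveI := aNoeth A K
  haveI := aArt A K
  obtain ⟨n, π₀, hπ₀⟩ := Module.Finite.exists_fin' A X
  haveI : IsArtinian A (Fin n → A) := inferInstance
  haveI : IsNoetherian A (Fin n → A) := inferInstance
  set 𝒮 : Set (Submodule A (Fin n → A)) :=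
    {C | (∃ C', IsCompl C C') ∧ Submodule.map π₀ C = ⊤} with h𝒮def
  have h𝒮top : (⊤ : Submodule A (Fin n → A)) ∈ 𝒮 := by
    refine ⟨⟨⊥, isCompl_top_bot⟩, ?_⟩
    rw [Submodule.map_top, LinearMap.range_eq_top.2 hπ₀]
  obtain ⟨P, hP𝒮, hPmin⟩ :=
    (IsWellFounded.wf (r := ((· < ·) : Submodule A (Fin n → A) → _ → Prop))).has_min 𝒮
      ⟨⊤, h𝒮top⟩
  obtain ⟨⟨C, hC⟩, hPmap⟩ := hP𝒮
  set p : ↥P →ₗ[A] X := π₀.comp P.subtype with hpdef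
  -- projectivity of P
  haveI hPproj : Module.Projective A ↥P := by
    refine Module.Projective.of_split P.subtype (P.projectionOnto C hC) ?_
    apply LinearMap.ext
    intro x
    simp [Submodule.projectionOnto_apply_left]
  -- surjectivity of p
  have hpsurj : Function.Surjective p := by
    intro x
    have hx : x ∈ Submodule.map π₀ P := hPmap ▸ Submodule.mem_top
    obtain ⟨m, hm, rfl⟩ := hx
    exact ⟨⟨m, hm⟩, rfl⟩
  refine ⟨↥P, inferInstance, inferInstance, p, ⟨hPproj, hpsurj, ?_⟩, ?_⟩
  · -- smallness of the kernel
    intro L hL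
    by_contra hLne
    haveI : Module.Finite A ↥L := Module.Finite.iff_fg.2 (IsNoetherian.noetherian L)
    obtain ⟨r, j₀, hj₀⟩ := Module.Finite.exists_fin' A ↥L
    set j : (Fin r → A) →ₗ[A] ↥P := L.subtype.comp j₀ with hjdef
    have hrangej : LinearMap.range j = L := by
      rw [hjdef, LinearMap.range_comp, LinearMap.range_eq_top.2 hj₀, Submodule.map_subtype_top]
    have hpj_surj : Function.Surjective (p.comp j) := by
      rw [← LinearMap.range_eq_top, LinearMap.range_comp, hrangej]
      rw [eq_top_iff]
      intro x _
      obtain ⟨y, rfl⟩ := hpsurj x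
      have hy : y ∈ L ⊔ LinearMap.ker p := hL ▸ Submodule.mem_top
      obtain ⟨l, hl, k, hk, rfl⟩ := Submodule.mem_sup.1 hy
      have : p (l + k) = p l := by
        rw [map_add, LinearMap.mem_ker.1 hk, add_zero]
      rw [this]
      exact Submodule.mem_map_of_mem hl
    obtain ⟨s, hs⟩ := Module.projective_lifting_property (p.comp j) p hpj_surj
    set u : ↥P →ₗ[A] ↥P := j.comp s with hudef
    have hpu : p.comp u = p := by
      rw [hudef, ← LinearMap.comp_assoc, hs]
    have hrangeu : LinearMap.range u ≤ L := by
      rw [hudef, LinearMap.range_comp]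
      exact le_trans (LinearMap.map_le_range) (le_of_eq hrangej)
    -- stabilization of kernels and ranges of powers of u
    have hkermono : Monotone (fun m : ℕ => LinearMap.ker (u ^ m)) := by
      intro a b hab x hx
      have : u ^ b = (u ^ (b - a)) * (u ^ a) := by
        rw [← pow_add]
        congr 1
        omega
      rw [LinearMap.mem_ker] at hx ⊢
      rw [this, Module.End.mul_eq_comp, LinearMap.comp_apply, hx, map_zero]
    have hranmono : Monotone (fun m : ℕ => OrderDual.toDual (LinearMap.range (u ^ m))) := by
      intro a b hab
      show LinearMap.range (u ^ b) ≤ LinearMap.range (u ^ a)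
      have : u ^ b = (u ^ a) * (u ^ (b - a)) := by
        rw [← pow_add]
        congr 1
        omega
      rw [this, Module.End.mul_eq_comp, LinearMap.range_comp]
      exact LinearMap.map_le_range
    obtain ⟨n₁, hn₁⟩ := monotone_stabilizes_iff_noetherian.mpr inferInstance
      ⟨fun m => LinearMap.ker (u ^ m), hkermono⟩
    obtain ⟨n₂, hn₂⟩ := IsArtinian.monotone_stabilizes
      (⟨fun m => OrderDual.toDual (LinearMap.range (u ^ m)), hranmono⟩ :
        ℕ →o (Submodule A ↥P)ᵒᵈ)
    have hstab : ∃ k, 1 ≤ k ∧ LinearMap.ker (u ^ k) = LinearMap.ker (u ^ (k + k)) ∧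
        LinearMap.range (u ^ k) = LinearMap.range (u ^ (k + k)) := by
      refine ⟨n₁ + n₂ + 1, by omega, ?_, ?_⟩
      · have h1 : LinearMap.ker (u ^ n₁) = LinearMap.ker (u ^ (n₁ + n₂ + 1)) :=
          hn₁ _ (by omega)
        have h2 : LinearMap.ker (u ^ n₁) =
            LinearMap.ker (u ^ (n₁ + n₂ + 1 + (n₁ + n₂ + 1))) := hn₁ _ (by omega)
        exact h1.symm.trans h2
      · have h1 : LinearMap.range (u ^ n₂) = LinearMap.range (u ^ (n₁ + n₂ + 1)) :=
          hn₂ _ (by omega)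
        have h2 : LinearMap.range (u ^ n₂) =
            LinearMap.range (u ^ (n₁ + n₂ + 1 + (n₁ + n₂ + 1))) := hn₂ _ (by omega)
        exact h1.symm.trans h2
    obtain ⟨k, hk1, hker2, hran2⟩ := hstab
    have hcompl : IsCompl (LinearMap.range (u ^ k)) (LinearMap.ker (u ^ k)) := by
      constructor
      · rw [Submodule.disjoint_def]
        rintro x ⟨y, rfl⟩ hker
        have : y ∈ LinearMap.ker (u ^ (k + k)) := by
          rw [LinearMap.mem_ker, pow_add, Module.End.mul_eq_comp, LinearMap.comp_apply]
          exact LinearMap.mem_ker.1 hker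
        rw [← hker2, LinearMap.mem_ker] at this
        rw [this]
      · rw [codisjoint_iff_le_sup]
        intro x _
        have hx : (u ^ k) x ∈ LinearMap.range (u ^ (k + k)) := hran2 ▸
          LinearMap.mem_range_self _ x
        obtain ⟨z, hz⟩ := hx
        refine Submodule.mem_sup.2 ⟨(u ^ k) z, LinearMap.mem_range_self _ z,
          x - (u ^ k) z, ?_, by abel⟩
        rw [LinearMap.mem_ker, map_sub]
        rw [show (u ^ k) ((u ^ k) z) = (u ^ (k + k)) z from by
          rw [pow_add, Module.End.mul_apply], hz]
        exact sub_self _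
    set Q := (LinearMap.range (u ^ k)).map P.subtype with hQdef
    have hQP : Q ≤ P := Submodule.map_subtype_le P _
    have hQ𝒮 : Q ∈ 𝒮 := by
      constructor
      · refine ⟨(LinearMap.ker (u ^ k)).map P.subtype ⊔ C, ?_⟩
        constructor
        · rw [Submodule.disjoint_def]
          rintro x ⟨q, hq, rfl⟩ hx
          obtain ⟨y, hy, c, hc, hsum⟩ := Submodule.mem_sup.1 hx
          obtain ⟨w, hw, rfl⟩ := hy
          have hcP : c ∈ P := by
            have : c = P.subtype q - P.subtype w := by
              rw [← hsum]; abel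
            rw [this]
            exact sub_mem q.2 w.2
          have hc0 : c = 0 := by
            have := hC.disjoint
            rw [Submodule.disjoint_def] at this
            exact this c hcP hc
          have hqw : P.subtype q = P.subtype w := by
            rw [hc0, add_zero] at hsum
            exact hsum.symm
          have hqw' : q = w := Subtype.val_injective hqw
          have hbot := hcompl.disjoint
          rw [Submodule.disjoint_def] at hbot
          have : q = 0 := hbot q hq (hqw' ▸ hw)
          rw [this, map_zero]
        · rw [codisjoint_iff_le_sup]
          intro x _
          have hx : x ∈ P ⊔ C := hC.codisjoint.eq_top ▸ Submodule.mem_top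
          obtain ⟨y, hy, c, hc, rfl⟩ := Submodule.mem_sup.1 hx
          have hy' : y ∈ Submodule.map P.subtype (LinearMap.range (u ^ k) ⊔
              LinearMap.ker (u ^ k)) := by
            rw [hcompl.sup_eq_top, Submodule.map_subtype_top]
            exact hy
          rw [Submodule.map_sup] at hy'
          obtain ⟨y₁, hy₁, y₂, hy₂, rfl⟩ := Submodule.mem_sup.1 hy'
          refine Submodule.mem_sup.2 ⟨y₁, hy₁, y₂ + c,
            Submodule.mem_sup.2 ⟨y₂, hy₂, c, hc, rfl⟩, by abel⟩
      · show Submodule.map π₀ ((LinearMap.range (u ^ k)).map P.subtype) = ⊤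
        rw [← Submodule.map_comp]
        have : Submodule.map (π₀ ∘ₗ P.subtype) (LinearMap.range (u ^ k)) =
            LinearMap.range (p ∘ₗ (u ^ k)) := (LinearMap.range_comp _ _).symm
        rw [this, p_comp_pow A p u hpu k]
        exact LinearMap.range_eq_top.2 hpsurj
    have hQeq : Q = P := by
      by_contra hne
      exact hPmin Q hQ𝒮 (lt_of_le_of_ne hQP hne)
    have hrangetop : LinearMap.range (u ^ k) = ⊤ := by
      have h1 : LinearMap.range (u ^ k) = Submodule.comap P.subtype Q := by
        rw [hQdef, Submodule.comap_map_eq_of_injective P.injective_subtype]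
      rw [h1, hQeq]
      exact Submodule.comap_subtype_self P
    have husurj : LinearMap.range u = ⊤ := by
      rw [eq_top_iff, ← hrangetop]
      rw [show u ^ k = u * u ^ (k - 1) from by rw [← pow_succ']; congr 1; omega,
        Module.End.mul_eq_comp, LinearMap.range_comp]
      exact LinearMap.map_le_range
    apply hLne
    rw [eq_top_iff, ← husurj]
    exact hrangeu
  · exact Module.Finite.iff_fg.2 (IsNoetherian.noetherian P)

/-- Existence of minimal projective presentations. -/
theorem exists_minpres (K : Type) [Field K] [Algebra K A] [FiniteDimensional K A]
    (X : Type) [AddCommGroup X] [Module A X] [Module.Finite A X] :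
    ∃ (P₀ P₁ : Type) (_ : AddCommGroup P₀) (_ : Module A P₀) (_ : AddCommGroup P₁)
      (_ : Module A P₁) (σ : P₁ →ₗ[A] P₀) (π : P₀ →ₗ[A] X)
      (_ : LinearMap.range σ = LinearMap.ker π),
      IsProjCover A π ∧
        ∀ (h : ∀ x, σ x ∈ LinearMap.ker π),
          IsProjCover A (σ.codRestrict (LinearMap.ker π) h) := by
  haveI := aNoeth A K
  obtain ⟨P₀, _, _, π, hπ, hP₀fin⟩ := exists_cover A K X
  haveI : IsNoetherian A P₀ := isNoetherian_of_isNoetherianRing_of_finite A P₀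
  haveI : Module.Finite A ↥(LinearMap.ker π) :=
    Module.Finite.iff_fg.2 (IsNoetherian.noetherian (LinearMap.ker π))
  obtain ⟨P₁, _, _, p₁, hp₁, hP₁fin⟩ := exists_cover A K ↥(LinearMap.ker π)
  refine ⟨P₀, P₁, inferInstance, inferInstance, inferInstance, inferInstance,
    (LinearMap.ker π).subtype.comp p₁, π, ?_, hπ, ?_⟩
  · rw [LinearMap.range_comp, LinearMap.range_eq_top.2 hp₁.2.1, Submodule.map_subtype_top]
  · intro h
    have heq : ((LinearMap.ker π).subtype.comp p₁).codRestrict (LinearMap.ker π) h = p₁ := by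
      apply LinearMap.ext
      intro x
      apply Subtype.ext
      rfl
    rw [heq]
    exact hp₁


end Existence

section Compare

variable {A B : Type} [Ring A] [Ring B] (f : A →+* B)

/-- If the tensored map of some projective presentation is bijective, then so is the
tensored map of any minimal projective presentation. -/
theorem compare_pres {P₁ P₀ Y Q₁ Q₀ : Type}
    [AddCommGroup P₁] [Module A P₁] [AddCommGroup P₀] [Module A P₀]
    [AddCommGroup Y] [Module A Y] [AddCommGroup Q₁] [Module A Q₁]
    [AddCommGroup Q₀] [Module A Q₀]
    (σ : P₁ →ₗ[A] P₀) (π : P₀ →ₗ[A] Y) (hexact : LinearMap.range σ = LinearMap.ker π)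
    (hπ : IsProjCover A π) (h : ∀ x, σ x ∈ LinearMap.ker π)
    (hσc : IsProjCover A (σ.codRestrict (LinearMap.ker π) h))
    (τ : Q₁ →ₗ[A] Q₀) (ρ : Q₀ →ₗ[A] Y) (hexact' : LinearMap.range τ = LinearMap.ker ρ)
    (hQ₀ : Module.Projective A Q₀) (hQ₁ : Module.Projective A Q₁)
    (hρ : Function.Surjective ρ)
    (hτbij : Function.Bijective (tensorMapOfHom f τ)) :
    Function.Bijective (tensorMapOfHom f σ) := by
  haveI := hπ.1
  haveI := hσc.1
  haveI := hQ₀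
  haveI := hQ₁
  -- comparison maps in degree 0
  obtain ⟨g₀, hg₀⟩ := Module.projective_lifting_property ρ π hρ
  obtain ⟨h₀, hh₀⟩ := Module.projective_lifting_property π ρ hπ.2.1
  have hu : π.comp (h₀.comp g₀) = π := by
    rw [← LinearMap.comp_assoc, hh₀, hg₀]
  have hubij := cover_endo_bij hπ (h₀.comp g₀) hu
  set e := LinearEquiv.ofBijective (h₀.comp g₀) hubij with hedef
  set r₀ : Q₀ →ₗ[A] P₀ := (e.symm : P₀ →ₗ[A] P₀).comp h₀ with hr₀def
  have hr₀g₀ : ∀ x, r₀ (g₀ x) = x := by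
    intro x
    show e.symm (h₀ (g₀ x)) = x
    have : h₀ (g₀ x) = e x := rfl
    rw [this, LinearEquiv.symm_apply_apply]
  have hπe : ∀ z, π (e.symm z) = π z := by
    intro z
    have h1 := LinearMap.congr_fun hu (e.symm z)
    rw [LinearMap.comp_apply] at h1
    have h2 : (h₀.comp g₀) (e.symm z) = z := e.apply_symm_apply z
    rw [h2] at h1
    exact h1.symm
  have hπr₀ : ∀ y, π (r₀ y) = ρ y := by
    intro y
    show π (e.symm (h₀ y)) = ρ y
    rw [hπe, ← LinearMap.comp_apply, hh₀]
  -- comparison maps in degree 1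
  have hmem₁ : ∀ x, g₀ (σ x) ∈ LinearMap.range τ := by
    intro x
    rw [hexact', LinearMap.mem_ker, ← LinearMap.comp_apply, ← LinearMap.comp_apply, hg₀]
    have := h x
    rw [LinearMap.mem_ker] at this
    exact this
  obtain ⟨g₁, hg₁⟩ := Module.projective_lifting_property τ.rangeRestrict
    ((g₀.comp σ).codRestrict (LinearMap.range τ) hmem₁) τ.surjective_rangeRestrict
  have hτg₁ : ∀ x, τ (g₁ x) = g₀ (σ x) := by
    intro x
    have := LinearMap.congr_fun hg₁ x
    exact congrArg Subtype.val this
  have hmem₂ : ∀ y, r₀ (τ y) ∈ LinearMap.ker π := by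
    intro y
    rw [LinearMap.mem_ker, hπr₀]
    have : τ y ∈ LinearMap.ker ρ := hexact' ▸ LinearMap.mem_range_self τ y
    exact LinearMap.mem_ker.1 this
  obtain ⟨r₁', hr₁'⟩ := Module.projective_lifting_property
    (σ.codRestrict (LinearMap.ker π) h)
    ((r₀.comp τ).codRestrict (LinearMap.ker π) hmem₂) hσc.2.1
  have hσr₁' : ∀ y, σ (r₁' y) = r₀ (τ y) := by
    intro y
    have := LinearMap.congr_fun hr₁' y
    exact congrArg Subtype.val this
  have hσv : ∀ x, σ (r₁' (g₁ x)) = σ x := by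
    intro x
    rw [hσr₁', hτg₁, hr₀g₀]
  have hvcomm : (σ.codRestrict (LinearMap.ker π) h).comp (r₁'.comp g₁) =
      σ.codRestrict (LinearMap.ker π) h := by
    apply LinearMap.ext
    intro x
    apply Subtype.ext
    exact hσv x
  have hvbij := cover_endo_bij hσc (r₁'.comp g₁) hvcomm
  set ev := LinearEquiv.ofBijective (r₁'.comp g₁) hvbij with hevdef
  set r₁ : Q₁ →ₗ[A] P₁ := (ev.symm : P₁ →ₗ[A] P₁).comp r₁' with hr₁def
  have hr₁g₁ : ∀ x, r₁ (g₁ x) = x := by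
    intro x
    show ev.symm (r₁' (g₁ x)) = x
    have : r₁' (g₁ x) = ev x := rfl
    rw [this, LinearEquiv.symm_apply_apply]
  have hσev : ∀ z, σ (ev.symm z) = σ z := by
    intro z
    have h1 := hσv (ev.symm z)
    have h2 : r₁' (g₁ (ev.symm z)) = (r₁'.comp g₁) (ev.symm z) := rfl
    have h3 : (r₁'.comp g₁) (ev.symm z) = z := ev.apply_symm_apply z
    rw [h2, h3] at h1
    exact h1.symm
  have hσr₁ : ∀ y, σ (r₁ y) = r₀ (τ y) := by
    intro y
    show σ (ev.symm (r₁' y)) = r₀ (τ y)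
    rw [hσev, hσr₁']
  -- pass to the tensored level
  set Eτ := LinearEquiv.ofBijective (tensorMapOfHom f τ) hτbij with hEdef
  have hleft : Function.LeftInverse
      (fun y => tensorMapOfHom f r₁ (Eτ.symm (tensorMapOfHom f g₀ y)))
      (tensorMapOfHom f σ) := by
    intro x
    have h1 : tensorMapOfHom f g₀ (tensorMapOfHom f σ x) =
        tensorMapOfHom f τ (tensorMapOfHom f g₁ x) := by
      rw [tw_comp_apply, tw_comp_apply]
      have : g₀.comp σ = τ.comp g₁ := by
        apply LinearMap.ext
        intro z
        exact (hτg₁ z).symm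
      rw [this]
    have h2 : Eτ.symm (tensorMapOfHom f τ (tensorMapOfHom f g₁ x)) =
        tensorMapOfHom f g₁ x := by
      have : tensorMapOfHom f τ (tensorMapOfHom f g₁ x) = Eτ (tensorMapOfHom f g₁ x) := rfl
      rw [this, LinearEquiv.symm_apply_apply]
    simp only [h1, h2]
    rw [tw_comp_apply]
    have : r₁.comp g₁ = LinearMap.id := by
      apply LinearMap.ext
      intro z
      exact hr₁g₁ z
    rw [this, tw_id]
    rfl
  have hright : Function.RightInverse
      (fun y => tensorMapOfHom f r₁ (Eτ.symm (tensorMapOfHom f g₀ y)))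
      (tensorMapOfHom f σ) := by
    intro y
    show tensorMapOfHom f σ (tensorMapOfHom f r₁ (Eτ.symm (tensorMapOfHom f g₀ y))) = y
    rw [tw_comp_apply]
    have hcomp : σ.comp r₁ = r₀.comp τ := by
      apply LinearMap.ext
      intro z
      exact hσr₁ z
    rw [hcomp, ← tw_comp_apply]
    have h2 : tensorMapOfHom f τ (Eτ.symm (tensorMapOfHom f g₀ y)) =
        tensorMapOfHom f g₀ y := Eτ.apply_symm_apply _
    rw [h2, tw_comp_apply]
    have : r₀.comp g₀ = LinearMap.id := by
      apply LinearMap.ext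
      intro z
      exact hr₀g₀ z
    rw [this, tw_id]
    rfl
  exact ⟨hleft.injective, hright.surjective⟩

end Compare

section RangeProd

variable {A : Type} [Ring A]

theorem range_prodMap' {P X Q Y : Type} [AddCommGroup P] [Module A P] [AddCommGroup X]
    [Module A X] [AddCommGroup Q] [Module A Q] [AddCommGroup Y] [Module A Y]
    (p : P →ₗ[A] X) (q : Q →ₗ[A] Y) :
    LinearMap.range (p.prodMap q) = (LinearMap.range p).prod (LinearMap.range q) := by
  ext ⟨x, y⟩
  simp only [LinearMap.mem_range, Submodule.mem_prod]
  constructor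
  · rintro ⟨⟨a, b⟩, hab⟩
    rw [LinearMap.prodMap_apply] at hab
    obtain ⟨h1, h2⟩ := Prod.ext_iff.1 hab
    exact ⟨⟨a, h1⟩, ⟨b, h2⟩⟩
  · rintro ⟨⟨a, ha⟩, ⟨b, hb⟩⟩
    refine ⟨(a, b), ?_⟩
    rw [LinearMap.prodMap_apply]
    exact Prod.ext_iff.2 ⟨ha, hb⟩

end RangeProd

/-- Let `f : A → B` be a ring epimorphism between finite dimensional
`K`-algebras, and let `C` be the class of finitely generated `A`-modules whose minimal
projective presentation becomes an isomorphism after applying `B ⊗_A -`.  Then `C` is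
closed under finite direct sums, direct summands and extensions. -/
theorem inverted_presentation_class_closure
    (K A B : Type) [Field K] [Ring A] [Algebra K A] [FiniteDimensional K A]
    [Ring B] [Algebra K B] [FiniteDimensional K B]
    (f : A →+* B) (hepi : IsRingEpi f) :
    (∀ X Y : ModuleCat.{0} A, Module.Finite A X → Module.Finite A Y →
      MinPresInverted f X → MinPresInverted f Y →
      MinPresInverted f (ModuleCat.of A (↑X × ↑Y))) ∧
    (∀ X Y : ModuleCat.{0} A, Module.Finite A X → Module.Finite A Y →
      MinPresInverted f (ModuleCat.of A (↑X × ↑Y)) → MinPresInverted f X) ∧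
    (∀ X Y Z : ModuleCat.{0} A, Module.Finite A X → Module.Finite A Y →
      Module.Finite A Z →
      ∀ (i : ↑X →ₗ[A] ↑Y) (q : ↑Y →ₗ[A] ↑Z), Function.Injective i →
        Function.Surjective q → LinearMap.range i = LinearMap.ker q →
        MinPresInverted f X → MinPresInverted f Z → MinPresInverted f Y) := by
  refine ⟨?_, ?_, ?_⟩
  · -- closure under direct sums
    intro X Y hXfin hYfin hX hY P₀ P₁ σ π hexact hπ hσc
    haveI := hXfin; haveI := hYfin
    obtain ⟨QX₀, QX₁, iX0, iX0', iX1, iX1', σX, πX, hexX, hπX, hcovX⟩ :=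
      exists_minpres A K (↑X)
    obtain ⟨QY₀, QY₁, iY0, iY0', iY1, iY1', σY, πY, hexY, hπY, hcovY⟩ :=
      exists_minpres A K (↑Y)
    have hbX : Function.Bijective (tensorMapOfHom f σX) :=
      hX (ModuleCat.of A QX₀) (ModuleCat.of A QX₁) σX πX hexX hπX
        (hcovX (fun x => hexX ▸ LinearMap.mem_range_self σX x))
    have hbY : Function.Bijective (tensorMapOfHom f σY) :=
      hY (ModuleCat.of A QY₀) (ModuleCat.of A QY₁) σY πY hexY hπY
        (hcovY (fun x => hexY ▸ LinearMap.mem_range_self σY x))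
    have hexact'' : LinearMap.range (σX.prodMap σY) = LinearMap.ker (πX.prodMap πY) := by
      rw [range_prodMap', LinearMap.ker_prodMap, hexX, hexY]
    haveI := hπX.1
    haveI := hπY.1
    haveI := (hcovX (fun x => hexX ▸ LinearMap.mem_range_self σX x)).1
    haveI := (hcovY (fun x => hexY ▸ LinearMap.mem_range_self σY x)).1
    have hρsurj : Function.Surjective (πX.prodMap πY) := by
      intro ⟨x, y⟩
      obtain ⟨a, ha⟩ := hπX.2.1 x
      obtain ⟨b, hb⟩ := hπY.2.1 y
      exact ⟨(a, b), by rw [LinearMap.prodMap_apply]; exact Prod.ext_iff.2 ⟨ha, hb⟩⟩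
    exact compare_pres f σ π hexact hπ _ hσc (σX.prodMap σY) (πX.prodMap πY) hexact''
      inferInstance inferInstance hρsurj (tw_bij_prodMap f σX σY hbX hbY)
  · -- closure under direct summands
    intro X Y hXfin hYfin hXY P₀ P₁ σ π hexact hπ hσc
    haveI := hXfin; haveI := hYfin
    obtain ⟨QX₀, QX₁, iX0, iX0', iX1, iX1', σX, πX, hexX, hπX, hcovX⟩ :=
      exists_minpres A K (↑X)
    obtain ⟨QY₀, QY₁, iY0, iY0', iY1, iY1', σY, πY, hexY, hπY, hcovY⟩ :=
      exists_minpres A K (↑Y)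
    haveI := hπX.1
    haveI := hπY.1
    haveI := (hcovX (fun x => hexX ▸ LinearMap.mem_range_self σX x)).1
    haveI := (hcovY (fun x => hexY ▸ LinearMap.mem_range_self σY x)).1
    have hexact'' : LinearMap.range (σX.prodMap σY) = LinearMap.ker (πX.prodMap πY) := by
      rw [range_prodMap', LinearMap.ker_prodMap, hexX, hexY]
    have hρcover : IsProjCover A (πX.prodMap πY) := hπX.prodMap hπY
    -- the product presentation is minimal
    have hsmallX : IsSmallSub (LinearMap.ker σX) := by
      intro L hL
      refine (hcovX (fun x => hexX ▸ LinearMap.mem_range_self σX x)).2.2 L ?_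
      rwa [LinearMap.ker_codRestrict]
    have hsmallY : IsSmallSub (LinearMap.ker σY) := by
      intro L hL
      refine (hcovY (fun x => hexY ▸ LinearMap.mem_range_self σY x)).2.2 L ?_
      rwa [LinearMap.ker_codRestrict]
    have hcodcover : IsProjCover A ((σX.prodMap σY).codRestrict
        (LinearMap.ker (πX.prodMap πY))
        (fun x => hexact'' ▸ LinearMap.mem_range_self (σX.prodMap σY) x)) := by
      refine ⟨inferInstance, ?_, ?_⟩
      · rintro ⟨⟨x, y⟩, hmem⟩
        rw [LinearMap.mem_ker, LinearMap.prodMap_apply] at hmem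
        obtain ⟨h1, h2⟩ := Prod.ext_iff.1 hmem
        have hx : x ∈ LinearMap.range σX := hexX ▸ LinearMap.mem_ker.2 h1
        have hy : y ∈ LinearMap.range σY := hexY ▸ LinearMap.mem_ker.2 h2
        obtain ⟨a, ha⟩ := hx
        obtain ⟨b, hb⟩ := hy
        refine ⟨(a, b), ?_⟩
        apply Subtype.ext
        rw [LinearMap.codRestrict_apply, LinearMap.prodMap_apply]
        exact Prod.ext_iff.2 ⟨ha, hb⟩
      · intro L hL
        rw [LinearMap.ker_codRestrict, LinearMap.ker_prodMap,
          LinearMap.prod_eq_sup_map] at hL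
        exact ((hsmallX.map (LinearMap.inl A QX₁ QY₁)).sup
          (hsmallY.map (LinearMap.inr A QX₁ QY₁))) L hL
    have hbig : Function.Bijective (tensorMapOfHom f (σX.prodMap σY)) :=
      hXY (ModuleCat.of A (QX₀ × QY₀)) (ModuleCat.of A (QX₁ × QY₁)) (σX.prodMap σY)
        (πX.prodMap πY) hexact'' hρcover hcodcover
    have hbX : Function.Bijective (tensorMapOfHom f σX) := tw_bij_of_prodMap f σX σY hbig
    exact compare_pres f σ π hexact hπ _ hσc σX πX hexX inferInstance inferInstance
      hπX.2.1 hbX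
  · -- closure under extensions
    intro X Y Z hXfin hYfin hZfin i q hi hq hiq hXinv hZinv P₀ P₁ σ π hexact hπ hσc
    haveI := hXfin; haveI := hYfin; haveI := hZfin
    obtain ⟨QX₀, QX₁, iX0, iX0', iX1, iX1', σX, πX, hexX, hπX, hcovX⟩ :=
      exists_minpres A K (↑X)
    obtain ⟨QZ₀, QZ₁, iZ0, iZ0', iZ1, iZ1', σZ, πZ, hexZ, hπZ, hcovZ⟩ :=
      exists_minpres A K (↑Z)
    haveI := hπX.1
    haveI := hπZ.1
    haveI := (hcovX (fun x => hexX ▸ LinearMap.mem_range_self σX x)).1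
    haveI := (hcovZ (fun x => hexZ ▸ LinearMap.mem_range_self σZ x)).1
    have hbX : Function.Bijective (tensorMapOfHom f σX) :=
      hXinv (ModuleCat.of A QX₀) (ModuleCat.of A QX₁) σX πX hexX hπX
        (hcovX (fun x => hexX ▸ LinearMap.mem_range_self σX x))
    have hbZ : Function.Bijective (tensorMapOfHom f σZ) :=
      hZinv (ModuleCat.of A QZ₀) (ModuleCat.of A QZ₁) σZ πZ hexZ hπZ
        (hcovZ (fun x => hexZ ▸ LinearMap.mem_range_self σZ x))
    -- horseshoe construction
    obtain ⟨γ, hγ⟩ := Module.projective_lifting_property q πZ hq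
    set ρ₀ : QX₀ × QZ₀ →ₗ[A] ↑Y := (i.comp πX).coprod γ with hρ₀def
    have hρ₀surj : Function.Surjective ρ₀ := by
      intro y
      obtain ⟨w, hw⟩ := hπZ.2.1 (q y)
      have hqy : q (y - γ w) = 0 := by
        rw [map_sub, ← LinearMap.comp_apply, hγ, hw, sub_self]
      have : y - γ w ∈ LinearMap.range i := hiq ▸ LinearMap.mem_ker.2 hqy
      obtain ⟨x, hx⟩ := this
      obtain ⟨v, hv⟩ := hπX.2.1 x
      refine ⟨(v, w), ?_⟩
      rw [hρ₀def, LinearMap.coprod_apply, LinearMap.comp_apply, hv, hx]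
      abel
    have hmemi : ∀ c, γ (σZ c) ∈ LinearMap.range i := by
      intro c
      rw [hiq, LinearMap.mem_ker, ← LinearMap.comp_apply, hγ]
      have : σZ c ∈ LinearMap.ker πZ := hexZ ▸ LinearMap.mem_range_self σZ c
      exact LinearMap.mem_ker.1 this
    set ei := LinearEquiv.ofInjective i hi with heidef
    set ψ : QZ₁ →ₗ[A] ↑X :=
      -((ei.symm : ↥(LinearMap.range i) →ₗ[A] ↑X).comp
        ((γ.comp σZ).codRestrict (LinearMap.range i) hmemi)) with hψdef
    have hiψ : ∀ c, i (ψ c) = -(γ (σZ c)) := by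
      intro c
      have h2 : ∀ m : ↥(LinearMap.range i), i (ei.symm m) = ↑m := by
        intro m
        have h3 : ↑(ei (ei.symm m)) = (↑m : ↑Y) :=
          congrArg Subtype.val (ei.apply_symm_apply m)
        rwa [heidef, LinearEquiv.ofInjective_apply] at h3
      have h4 : ψ c = -(ei.symm ⟨γ (σZ c), hmemi c⟩) := rfl
      rw [h4, map_neg, h2]
    obtain ⟨δ, hδ⟩ := Module.projective_lifting_property πX ψ hπX.2.1
    have hπXδ : ∀ c, πX (δ c) = ψ c := fun c => LinearMap.congr_fun hδ c
    set ρ₁ : QX₁ × QZ₁ →ₗ[A] QX₀ × QZ₀ :=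
      (σX.comp (LinearMap.fst A QX₁ QZ₁) + δ.comp (LinearMap.snd A QX₁ QZ₁)).prod
        (σZ.comp (LinearMap.snd A QX₁ QZ₁)) with hρ₁def
    have hρ₁apply : ∀ a c, ρ₁ (a, c) = (σX a + δ c, σZ c) := by
      intro a c
      rw [hρ₁def]
      rfl
    have hexact'' : LinearMap.range ρ₁ = LinearMap.ker ρ₀ := by
      apply le_antisymm
      · rintro _ ⟨⟨a, c⟩, rfl⟩
        rw [LinearMap.mem_ker, hρ₁apply, hρ₀def, LinearMap.coprod_apply,
          LinearMap.comp_apply]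
        have hσXa : πX (σX a) = 0 := by
          have : σX a ∈ LinearMap.ker πX := hexX ▸ LinearMap.mem_range_self σX a
          exact LinearMap.mem_ker.1 this
        rw [map_add, hσXa, zero_add, hπXδ, hiψ]
        abel
      · rintro ⟨v, w⟩ hmem
        rw [LinearMap.mem_ker, hρ₀def, LinearMap.coprod_apply, LinearMap.comp_apply] at hmem
        have hw : πZ w = 0 := by
          have h1 : q (i (πX v) + γ w) = 0 := by rw [hmem, map_zero]
          have h2 : q (i (πX v)) = 0 := by
            have : i (πX v) ∈ LinearMap.ker q := hiq ▸ LinearMap.mem_range_self i (πX v)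
            exact LinearMap.mem_ker.1 this
          rw [map_add, h2, zero_add, ← LinearMap.comp_apply, hγ] at h1
          exact h1
        have : w ∈ LinearMap.range σZ := hexZ ▸ LinearMap.mem_ker.2 hw
        obtain ⟨c, rfl⟩ := this
        have hveq : i (πX v) = i (ψ c) := by
          rw [hiψ]
          have h5 : i (πX v) + γ (σZ c) = 0 := hmem
          exact eq_neg_of_add_eq_zero_left h5
        have hπv : πX v = ψ c := hi hveq
        have : v - δ c ∈ LinearMap.range σX := by
          rw [hexX, LinearMap.mem_ker, map_sub, hπv, hπXδ, sub_self]
        obtain ⟨a, ha⟩ := this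
        refine ⟨(a, c), ?_⟩
        rw [hρ₁apply, ha]
        refine Prod.ext_iff.2 ⟨?_, rfl⟩
        show v - δ c + δ c = v
        abel
      -- exactness done
    have hfst : (LinearMap.fst A QX₀ QZ₀).comp ρ₁ =
        σX.comp (LinearMap.fst A QX₁ QZ₁) + δ.comp (LinearMap.snd A QX₁ QZ₁) := by
      apply LinearMap.ext
      rintro ⟨a, c⟩
      rw [LinearMap.comp_apply, hρ₁apply]
      rfl
    have hsnd : (LinearMap.snd A QX₀ QZ₀).comp ρ₁ =
        σZ.comp (LinearMap.snd A QX₁ QZ₁) := by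
      apply LinearMap.ext
      rintro ⟨a, c⟩
      rw [LinearMap.comp_apply, hρ₁apply]
      rfl
    have hρ₁bij : Function.Bijective (tensorMapOfHom f ρ₁) :=
      tw_bij_triangular f ρ₁ σX δ σZ hfst hsnd hbX hbZ
    exact compare_pres f σ π hexact hπ _ hσc ρ₁ ρ₀ hexact'' inferInstance inferInstance
      hρ₀surj hρ₁bij

end
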